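/- Let n ≥ 0, let K be a field of characteristic zero, and let V be an (n+1)-dimensional K-vector space with basis ε°_0, …, ε°_n. Let N : V → V be the linear map with N ε°_0 = 0 and N ε°_j = ε°_{j−1} for 1 ≤ j ≤ n. Let T : V → V be a linear map, set δ := (T − I) ε°_0, and assume δ ≠ 0 and that the image of T − I is contained in the line K·δ. Then, setting ε_0 := ε°_0, there exist unique vectors ε_1, …, ε_n ∈ V such that N ε_j = ε_{j−1} for 1 ≤ j ≤ n and (T − I) ε_j = 0 for 1 ≤ j ≤ n. -/

import Mathlib

/-- Lemma 3.1b of the paper. Let `V` be an `(n+1)`-dimensional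
vector space over a field `K` of characteristic zero, with basis
`ε° 0, …, ε° n`, `N` the lowering operator, `T` a linear map with
`δ := (T − I) ε° 0 ≠ 0` and the image of `T − I` contained in the line `K·δ`.
Then, setting `ε 0 := ε° 0`, there exist unique `ε 1, …, ε n` with
`N (ε j) = ε (j-1)` and `(T − I) (ε j) = 0` for `1 ≤ j ≤ n`. -/
theorem stmt1 (n : ℕ) (K : Type*) [Field K] [CharZero K]
    (V : Type*) [AddCommGroup V] [Module K V]
    (ε₀ : Module.Basis (Fin (n + 1)) K V)
    (N : V →ₗ[K] V) (hN0 : N (ε₀ 0) = 0)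
    (hN : ∀ j : Fin n, N (ε₀ j.succ) = ε₀ j.castSucc)
    (T : V →ₗ[K] V)
    (δ : V) (hδdef : δ = T (ε₀ 0) - ε₀ 0) (hδ : δ ≠ 0)
    (him : ∀ x : V, T x - x ∈ Submodule.span K {δ}) :
    ∃! ε : Fin (n + 1) → V, ε 0 = ε₀ 0 ∧
      (∀ j : Fin n, N (ε j.succ) = ε j.castSucc) ∧
      (∀ j : Fin n, T (ε j.succ) - ε j.succ = 0) := by
  classical
  choose a ha using fun x => Submodule.mem_span_singleton.mp (him x)
  -- ha : ∀ x, a x • δ = T x - x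
  -- kernel of N is spanned by ε₀ 0
  have hker : ∀ x : V, N x = 0 → ∃ c : K, x = c • ε₀ 0 := by
    intro x hx
    have hrep : ∑ i, ε₀.repr x i • ε₀ i = x := ε₀.sum_repr x
    have hNx : N x = ∑ j : Fin n, ε₀.repr x j.succ • ε₀ j.castSucc := by
      conv_lhs => rw [← hrep]
      rw [map_sum, Fin.sum_univ_succ]
      simp [hN0, hN]
    have hli : LinearIndependent K (fun j : Fin n => ε₀ j.castSucc) :=
      ε₀.linearIndependent.comp Fin.castSucc (Fin.castSucc_injective n)
    have hz : ∀ j : Fin n, ε₀.repr x j.succ = 0 := by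
      apply Fintype.linearIndependent_iff.mp hli (fun j => ε₀.repr x j.succ)
      rw [← hNx]; exact hx
    refine ⟨ε₀.repr x 0, ?_⟩
    conv_lhs => rw [← hrep]
    rw [Fin.sum_univ_succ]
    simp [hz]
  -- the shift-up operator
  set s : V →ₗ[K] V := ε₀.constr K
    (fun i : Fin (n + 1) => if h : (i : ℕ) < n then ε₀ ⟨(i : ℕ) + 1, by omega⟩ else 0)
    with hs
  have hs_apply : ∀ i : Fin (n + 1), (h : (i : ℕ) < n) →
      s (ε₀ i) = ε₀ ⟨(i : ℕ) + 1, by omega⟩ := by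
    intro i h
    rw [hs, Module.Basis.constr_basis, dif_pos h]
  have hNs_basis : ∀ i : Fin (n + 1), (i : ℕ) < n → N (s (ε₀ i)) = ε₀ i := by
    intro i h
    rw [hs_apply i h]
    have := hN ⟨(i : ℕ), h⟩
    have h1 : (⟨(i : ℕ), h⟩ : Fin n).succ = ⟨(i : ℕ) + 1, by omega⟩ := rfl
    have h2 : (⟨(i : ℕ), h⟩ : Fin n).castSucc = i := by
      ext; simp
    rw [h1, h2] at this
    exact this
  -- graded spans
  set W : ℕ → Submodule K V :=
    fun j => Submodule.span K (ε₀ '' {i : Fin (n + 1) | (i : ℕ) ≤ j}) with hW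
  have hε₀0W : ∀ j : ℕ, ε₀ 0 ∈ W j := by
    intro j
    exact Submodule.subset_span ⟨0, by simp, rfl⟩
  have hNsW : ∀ j : ℕ, j < n → ∀ v ∈ W j, N (s v) = v := by
    intro j hj v hv
    induction hv using Submodule.span_induction with
    | mem v hv =>
      obtain ⟨i, hi, rfl⟩ := hv
      exact hNs_basis i (lt_of_le_of_lt hi hj)
    | zero => simp
    | add x y _ _ hx hy => rw [map_add, map_add, hx, hy]
    | smul c x _ hx => rw [map_smul, map_smul, hx]
  have hsW : ∀ j : ℕ, ∀ v ∈ W j, s v ∈ W (j + 1) := by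
    intro j v hv
    induction hv using Submodule.span_induction with
    | mem v hv =>
      obtain ⟨i, hi, rfl⟩ := hv
      by_cases h : (i : ℕ) < n
      · rw [hs_apply i h]
        exact Submodule.subset_span ⟨⟨(i : ℕ) + 1, by omega⟩, by simpa using hi, rfl⟩
      · rw [hs, Module.Basis.constr_basis, dif_neg h]
        exact (W (j + 1)).zero_mem
    | zero => simp
    | add x y _ _ hx hy => rw [map_add]; exact (W (j + 1)).add_mem hx hy
    | smul c x _ hx => rw [map_smul]; exact (W (j + 1)).smul_mem c hx
  -- the recursively defined vectors
  set e : ℕ → V := fun j => Nat.rec (ε₀ 0) (fun _ prev => s prev - a (s prev) • ε₀ 0) j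
    with he
  have he0 : e 0 = ε₀ 0 := rfl
  have hestep : ∀ j : ℕ, e (j + 1) = s (e j) - a (s (e j)) • ε₀ 0 := fun j => rfl
  have heW : ∀ j : ℕ, j ≤ n → e j ∈ W j := by
    intro j
    induction j with
    | zero => intro _; exact hε₀0W 0
    | succ j ih =>
      intro hj
      rw [hestep]
      exact (W (j + 1)).sub_mem (hsW j _ (ih (by omega)))
        ((W (j + 1)).smul_mem _ (hε₀0W (j + 1)))
  have hNe : ∀ j : ℕ, j < n → N (e (j + 1)) = e j := by
    intro j hj
    rw [hestep, map_sub, map_smul, hN0, smul_zero, sub_zero]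
    exact hNsW j hj (e j) (heW j hj.le)
  have hTe : ∀ j : ℕ, T (e (j + 1)) - e (j + 1) = 0 := by
    intro j
    have h1 : T (s (e j)) - s (e j) = a (s (e j)) • (T (ε₀ 0) - ε₀ 0) := by
      rw [← hδdef]; exact (ha _).symm
    have h3 : T (s (e j)) = s (e j) + a (s (e j)) • (T (ε₀ 0) - ε₀ 0) := by
      rw [← h1]; abel
    rw [hestep, map_sub, map_smul, h3]
    module
  -- the witness
  refine ⟨fun i => e (i : ℕ), ⟨rfl, ?_, ?_⟩, ?_⟩
  · intro j
    exact hNe (j : ℕ) j.isLt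
  · intro j
    exact hTe (j : ℕ)
  · rintro ε' ⟨hε'0, hε'N, hε'T⟩
    have key : ∀ (j : ℕ) (h : j < n + 1), ε' ⟨j, h⟩ = e j := by
      intro j
      induction j with
      | zero => intro h; exact hε'0
      | succ j ih =>
        intro h
        have hjn : j < n := by omega
        have hsucc : (⟨j, hjn⟩ : Fin n).succ = ⟨j + 1, h⟩ := rfl
        have hcast : (⟨j, hjn⟩ : Fin n).castSucc = ⟨j, by omega⟩ := rfl
        have h1 : N (ε' ⟨j + 1, h⟩) = e j := by
          have := hε'N ⟨j, hjn⟩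
          rw [hsucc, hcast] at this
          rw [this]
          exact ih (by omega)
        have h3 : N (ε' ⟨j + 1, h⟩ - e (j + 1)) = 0 := by
          rw [map_sub, h1, hNe j hjn, sub_self]
        obtain ⟨c, hc⟩ := hker _ h3
        have hT' : T (ε' ⟨j + 1, h⟩) - ε' ⟨j + 1, h⟩ = 0 := by
          have := hε'T ⟨j, hjn⟩
          rwa [hsucc] at this
        have h4 : T (ε' ⟨j + 1, h⟩ - e (j + 1)) - (ε' ⟨j + 1, h⟩ - e (j + 1)) = 0 := by
          rw [map_sub]
          have h5 := hTe j
          rw [sub_sub_sub_comm]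
          rw [hT', h5, sub_self]
        rw [hc] at h4
        have h6 : c • δ = 0 := by
          rw [hδdef, smul_sub, ← map_smul]
          exact h4
        have hc0 : c = 0 := by
          rcases smul_eq_zero.mp h6 with h' | h'
          · exact h'
          · exact absurd h' hδ
        have : ε' ⟨j + 1, h⟩ - e (j + 1) = 0 := by rw [hc, hc0, zero_smul]
        exact sub_eq_zero.mp this
    funext i
    have := key (i : ℕ) i.isLt
    rwa [Fin.eta] at this
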